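/- Let A, B ⊆ ℝ, let R be a correspondence between A and B with distortion dis R = c, and suppose A is t-separated for some t > 2c. Choose for each p ∈ A a point p' ∈ R(p). Then for any three distinct points p, q, r ∈ A: if p lies strictly between q and r on the real line, then p' lies between q' and r'. -/
import Mathlib


open ENNReal

/-- The distortion of a relation `R ⊆ ℝ × ℝ`, valued in `ℝ≥0∞`. -/
noncomputable def relDis (R : Set (ℝ × ℝ)) : ℝ≥0∞ :=
  ⨆ p ∈ R, ⨆ q ∈ R, ENNReal.ofReal |dist p.1 q.1 - dist p.2 q.2|

/-- `R` is a correspondence between the subsets `A` and `B` of `ℝ`: a relation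
contained in `A × B` whose projections onto `A` and onto `B` are surjective. -/
def IsCorrBetween (A B : Set ℝ) (R : Set (ℝ × ℝ)) : Prop :=
  R ⊆ A ×ˢ B ∧ (∀ a ∈ A, ∃ b ∈ B, (a, b) ∈ R) ∧ ∀ b ∈ B, ∃ a ∈ A, (a, b) ∈ R

lemma relDis_key (R : Set (ℝ × ℝ)) (c : ℝ) (hc0 : 0 ≤ c)
    (hc : relDis R = ENNReal.ofReal c) {a fa b fb : ℝ}
    (ha : (a, fa) ∈ R) (hb : (b, fb) ∈ R) : abs (|a - b| - |fa - fb|) ≤ c := by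
  have h : ENNReal.ofReal |dist (a, fa).1 (b, fb).1 - dist (a, fa).2 (b, fb).2| ≤ relDis R := by
    refine le_trans ?_ (le_iSup₂ (f := fun p (_ : p ∈ R) =>
      ⨆ q ∈ R, ENNReal.ofReal |dist p.1 q.1 - dist p.2 q.2|) (a, fa) ha)
    exact le_iSup₂ (f := fun q (_ : q ∈ R) =>
      ENNReal.ofReal |dist (a, fa).1 q.1 - dist (a, fa).2 q.2|) (b, fb) hb
  rw [hc] at h
  have := (ENNReal.ofReal_le_ofReal_iff hc0).mp h
  simpa [Real.dist_eq] using this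

lemma core (c t : ℝ) (hc0 : 0 ≤ c) (ht : 2*c < t)
    (q p r fq fp fr : ℝ) (hqp : q < p) (hpr : p < r)
    (sep1 : t ≤ p - q) (sep2 : t ≤ r - p)
    (k1 : abs ((p-q) - |fq - fp|) ≤ c) (k2 : abs ((r-p) - |fr - fp|) ≤ c)
    (k3 : abs ((r-q) - |fq - fr|) ≤ c) :
    min fq fr ≤ fp ∧ fp ≤ max fq fr := by
  rw [abs_le] at k1 k2 k3
  by_contra h
  rcases not_and_or.mp h with h | h <;> push_neg at h
  · rw [lt_min_iff] at h
    have hu : |fq - fp| = fq - fp := abs_of_pos (by linarith [h.1])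
    have hv : |fr - fp| = fr - fp := abs_of_pos (by linarith [h.2])
    have hd : |fq - fr| ≤ max (fq - fp) (fr - fp) := by
      rcases le_total fq fr with h' | h'
      · rw [abs_of_nonpos (by linarith)]; exact le_max_of_le_right (by linarith)
      · rw [abs_of_nonneg (by linarith)]; exact le_max_of_le_left (by linarith)
    rcases le_max_iff.mp hd with h' | h' <;> rw [hu] at k1 <;> rw [hv] at k2 <;> linarith
  · rw [max_lt_iff] at h
    have hu : |fq - fp| = fp - fq := by rw [abs_sub_comm]; exact abs_of_pos (by linarith [h.1])
    have hv : |fr - fp| = fp - fr := by rw [abs_sub_comm]; exact abs_of_pos (by linarith [h.2])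
    have hd : |fq - fr| ≤ max (fp - fq) (fp - fr) := by
      rcases le_total fq fr with h' | h'
      · rw [abs_of_nonpos (by linarith)]; exact le_max_of_le_left (by linarith)
      · rw [abs_of_nonneg (by linarith)]; exact le_max_of_le_right (by linarith)
    rcases le_max_iff.mp hd with h' | h' <;> rw [hu] at k1 <;> rw [hv] at k2 <;> linarith

/-- Let `R` be a correspondence between `A, B ⊆ ℝ` with distortion `c`, and let `A` be
`t`-separated with `t > 2c`. Choose for each `p ∈ A` a point `f p ∈ R(p)`. Then for any
three distinct points `p, q, r ∈ A`, if `p` lies strictly between `q` and `r`, then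
`f p` lies between `f q` and `f r`. -/
theorem stmt_7 (A B : Set ℝ) (R : Set (ℝ × ℝ)) (hR : IsCorrBetween A B R)
    (c : ℝ) (hc0 : 0 ≤ c) (hc : relDis R = ENNReal.ofReal c)
    (t : ℝ) (ht : 2 * c < t)
    (hsep : ∀ a ∈ A, ∀ b ∈ A, a ≠ b → t ≤ |a - b|)
    (f : ℝ → ℝ) (hf : ∀ p ∈ A, (p, f p) ∈ R)
    (p q r : ℝ) (hp : p ∈ A) (hq : q ∈ A) (hr : r ∈ A)
    (hpq : p ≠ q) (hpr : p ≠ r) (hqr : q ≠ r)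
    (h1 : min q r < p) (h2 : p < max q r) :
    min (f q) (f r) ≤ f p ∧ f p ≤ max (f q) (f r) := by
  have kqp := relDis_key R c hc0 hc (hf q hq) (hf p hp)
  have krp := relDis_key R c hc0 hc (hf r hr) (hf p hp)
  have kqr := relDis_key R c hc0 hc (hf q hq) (hf r hr)
  have krq := relDis_key R c hc0 hc (hf r hr) (hf q hq)
  have sq := hsep q hq p hp (Ne.symm hpq)
  have sr := hsep r hr p hp (Ne.symm hpr)
  rcases lt_or_gt_of_ne hqr with hlt | hlt
  · rw [min_eq_left hlt.le] at h1
    rw [max_eq_right hlt.le] at h2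
    have e1 : |q - p| = p - q := by rw [abs_sub_comm]; exact abs_of_pos (by linarith)
    have e2 : |r - p| = r - p := abs_of_pos (by linarith)
    have e3 : |q - r| = r - q := by rw [abs_sub_comm]; exact abs_of_pos (by linarith)
    rw [e1] at kqp sq
    rw [e2] at krp sr
    rw [e3] at kqr
    exact core c t hc0 ht q p r (f q) (f p) (f r) h1 h2 sq sr kqp krp kqr
  · rw [min_eq_right hlt.le] at h1
    rw [max_eq_left hlt.le] at h2
    rw [min_comm, max_comm]
    have e1 : |r - p| = p - r := by rw [abs_sub_comm]; exact abs_of_pos (by linarith)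
    have e2 : |q - p| = q - p := abs_of_pos (by linarith)
    have e3 : |r - q| = q - r := by rw [abs_sub_comm]; exact abs_of_pos (by linarith)
    rw [e1] at krp sr
    rw [e2] at kqp sq
    rw [e3] at krq
    exact core c t hc0 ht r p q (f r) (f p) (f q) h1 h2 sr sq krp kqp krq
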